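/- Let f : 2^Ω → ℝ≥0 be monotone non-decreasing and submodular with f(∅) = 0, and let the greedy algorithm pick elements v₁,...,v_r, where v_i maximizes f(T_{i−1} ∪ {v}) − f(T_{i−1}) and T_i = {v₁,...,v_i}. Then f(T_r) ≥ (1 − (1 − 1/r)^r) · max_{|T| = r} f(T) ≥ (1 − 1/e) · max_{|T| = r} f(T). -/

import Mathlib

/-- Nemhauser–Wolsey–Fisher: greedy maximization of a nonnegative monotone
submodular function `f` with `f ∅ = 0` under a cardinality constraint `r`
achieves at least `(1 - (1 - 1/r)^r) ≥ (1 - 1/e)` of the optimum. -/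
theorem stmt_18 {Ω : Type*} [DecidableEq Ω] [Fintype Ω]
    (f : Finset Ω → ℝ)
    (h0 : f ∅ = 0)
    (hnonneg : ∀ A : Finset Ω, 0 ≤ f A)
    (hmono : ∀ A B : Finset Ω, A ⊆ B → f A ≤ f B)
    (hsub : ∀ A B : Finset Ω, A ⊆ B → ∀ v ∉ B,
      f (insert v B) - f B ≤ f (insert v A) - f A)
    (r : ℕ) (hr : 0 < r)
    (T : ℕ → Finset Ω) (hT0 : T 0 = ∅)
    (hgreedy : ∀ i < r, ∃ v ∉ T i,
      T (i + 1) = insert v (T i) ∧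
      ∀ w : Ω, f (insert w (T i)) - f (T i) ≤ f (T (i + 1)) - f (T i)) :
    ∀ T' : Finset Ω, T'.card = r →
      (1 - (1 - 1 / (r : ℝ)) ^ r) * f T' ≤ f (T r) ∧
      (1 - 1 / Real.exp 1) * f T' ≤ f (T r) := by
  intro T' hT'
  have hrpos : (0:ℝ) < r := by exact_mod_cast hr
  have hr1 : (1:ℝ) ≤ r := by exact_mod_cast hr
  have hq : (0:ℝ) ≤ 1 - 1 / r := by
    have : 1 / (r:ℝ) ≤ 1 := by
      rw [div_le_one hrpos]; exact hr1
    linarith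
  -- marginal gains bound
  have hmarg : ∀ (A S : Finset Ω),
      f (A ∪ S) - f A ≤ ∑ v ∈ S, (f (insert v A) - f A) := by
    intro A S
    induction S using Finset.induction_on with
    | empty => simp
    | @insert a s ha ih =>
      rw [Finset.sum_insert ha]
      have hU : A ∪ insert a s = insert a (A ∪ s) := by
        ext x; simp [or_comm, or_left_comm, or_assoc]
      rw [hU]
      have hstep : f (insert a (A ∪ s)) - f (A ∪ s) ≤ f (insert a A) - f A := by
        by_cases hmem : a ∈ A ∪ s
        · have haA : a ∈ A := by
            rcases Finset.mem_union.1 hmem with h | h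
            · exact h
            · exact absurd h ha
          rw [Finset.insert_eq_self.2 hmem, Finset.insert_eq_self.2 haA]
          simp
        · exact hsub A (A ∪ s) Finset.subset_union_left a hmem
      linarith
  -- per-step contraction
  have step : ∀ i < r, f T' - f (T (i+1)) ≤ (1 - 1/(r:ℝ)) * (f T' - f (T i)) := by
    intro i hi
    obtain ⟨v, hv, hins, hmax⟩ := hgreedy i hi
    set δ := f (T (i+1)) - f (T i) with hδ
    have hX : f T' - f (T i) ≤ (r:ℝ) * δ := by
      have h1 : f T' ≤ f (T i ∪ T') := hmono _ _ Finset.subset_union_right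
      have h2 := hmarg (T i) T'
      have h3 : ∑ v ∈ T', (f (insert v (T i)) - f (T i)) ≤ ∑ _v ∈ T', δ :=
        Finset.sum_le_sum (fun w _ => hmax w)
      have h4 : ∑ _v ∈ T', δ = (r:ℝ) * δ := by
        rw [Finset.sum_const, hT', nsmul_eq_mul]
      linarith
    have hd : (f T' - f (T i)) / r ≤ δ := (div_le_iff₀ hrpos).2 (by linarith)
    have heq : (1 - 1/(r:ℝ)) * (f T' - f (T i))
        = (f T' - f (T i)) - (f T' - f (T i)) / r := by
      field_simp
    rw [heq]; linarith
  -- induction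
  have key : ∀ i, i ≤ r → f T' - f (T i) ≤ (1 - 1/(r:ℝ))^i * f T' := by
    intro i
    induction i with
    | zero => intro _; simp [hT0, h0]
    | succ i ih =>
      intro hi
      have hi' : i < r := hi
      have h1 := step i hi'
      have h2 := ih (le_of_lt hi')
      calc f T' - f (T (i+1)) ≤ (1 - 1/(r:ℝ)) * (f T' - f (T i)) := h1
        _ ≤ (1 - 1/(r:ℝ)) * ((1 - 1/(r:ℝ))^i * f T') :=
            mul_le_mul_of_nonneg_left h2 hq
        _ = (1 - 1/(r:ℝ))^(i+1) * f T' := by ring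
  have hfin := key r le_rfl
  have hfirst : (1 - (1 - 1 / (r : ℝ)) ^ r) * f T' ≤ f (T r) := by
    have : (1 - (1 - 1 / (r : ℝ)) ^ r) * f T'
        = f T' - (1 - 1/(r:ℝ))^r * f T' := by ring
    linarith [this]
  refine ⟨hfirst, ?_⟩
  -- compare (1-1/r)^r with 1/e
  have h1 : (1:ℝ) - 1/r ≤ Real.exp (-(1/r)) := by
    have := Real.add_one_le_exp (-(1/(r:ℝ)))
    linarith
  have h2 : ((1:ℝ) - 1/r)^r ≤ (Real.exp (-(1/r)))^r := pow_le_pow_left₀ hq h1 r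
  have h3 : (Real.exp (-(1/(r:ℝ))))^r = Real.exp (-1) := by
    rw [← Real.exp_nat_mul]
    congr 1
    field_simp
  have h4 : Real.exp (-1) = 1 / Real.exp 1 := by
    rw [Real.exp_neg]; exact (one_div _).symm
  have h5 : ((1:ℝ) - 1/r)^r ≤ 1 / Real.exp 1 := by
    rw [← h4]; rw [h3] at h2; exact h2
  have h6 : (1 - 1 / Real.exp 1) * f T' ≤ (1 - (1 - 1 / (r : ℝ)) ^ r) * f T' :=
    mul_le_mul_of_nonneg_right (by linarith) (hnonneg T')
  linarith
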